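/- Let F be a polynomial with |F| < 1 on an open interval containing the closed interval [a, b]. Then the initial value problem ẋ = √(1 - F(x)²), x(0) = a, viewed within [a, b], has a solution reaching b in finite time T = ∫_a^b dx/√(1 - F(x)²), and this T is the unique such time. -/
import Mathlib


open Polynomial Set intervalIntegral

theorem ode_reaches_endpoint (F : Polynomial ℝ) (a b a' b' : ℝ) (hab : a < b)
    (ha' : a' < a) (hb' : b < b')
    (hF : ∀ x ∈ Ioo a' b', (F.eval x) ^ 2 < 1) :
    (∃ x : ℝ → ℝ, x 0 = a ∧
        x (∫ s in a..b, 1 / Real.sqrt (1 - (F.eval s) ^ 2)) = b ∧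
        ∀ t ∈ Icc (0 : ℝ) (∫ s in a..b, 1 / Real.sqrt (1 - (F.eval s) ^ 2)),
          x t ∈ Icc a b ∧ HasDerivAt x (Real.sqrt (1 - (F.eval (x t)) ^ 2)) t) ∧
    ∀ T : ℝ, 0 ≤ T →
      (∃ x : ℝ → ℝ, x 0 = a ∧ x T = b ∧
        ∀ t ∈ Icc (0 : ℝ) T,
          x t ∈ Icc a b ∧ HasDerivAt x (Real.sqrt (1 - (F.eval (x t)) ^ 2)) t) →
      T = ∫ s in a..b, 1 / Real.sqrt (1 - (F.eval s) ^ 2) := by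
  set c : ℝ := (a' + a) / 2 with hc
  set d : ℝ := (b + b') / 2 with hd
  have hca : c < a := by rw [hc]; linarith
  have ha'c : a' < c := by rw [hc]; linarith
  have hbd : b < d := by rw [hd]; linarith
  have hdb' : d < b' := by rw [hd]; linarith
  have hcd : c < d := by linarith
  set clamp : ℝ → ℝ := fun s => max c (min s d) with hclamp
  have hclamp_mem : ∀ s, clamp s ∈ Icc c d := fun s =>
    ⟨le_max_left _ _, max_le hcd.le (min_le_right _ _)⟩
  have hclamp_eq : ∀ s ∈ Icc c d, clamp s = s := by
    intro s hs
    rw [hclamp]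
    simp only [min_eq_left hs.2, max_eq_right hs.1]
  have hpos : ∀ s, 0 < 1 - F.eval (clamp s) ^ 2 := by
    intro s
    have h := hF (clamp s) ⟨lt_of_lt_of_le ha'c (hclamp_mem s).1,
      lt_of_le_of_lt (hclamp_mem s).2 hdb'⟩
    linarith
  set g : ℝ → ℝ := fun s => 1 / Real.sqrt (1 - F.eval (clamp s) ^ 2) with hg
  have hsqrt_pos : ∀ s, 0 < Real.sqrt (1 - F.eval (clamp s) ^ 2) := fun s =>
    Real.sqrt_pos.mpr (hpos s)
  have hgpos : ∀ s, 0 < g s := fun s => one_div_pos.mpr (hsqrt_pos s)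
  have hclamp_cont : Continuous clamp := continuous_const.max (continuous_id.min continuous_const)
  have hgcont : Continuous g := by
    apply continuous_const.div
    · exact Real.continuous_sqrt.comp
        ((continuous_const.sub ((F.continuous).comp hclamp_cont |>.pow 2)))
    · exact fun s => (hsqrt_pos s).ne'
  set G : ℝ → ℝ := fun y => ∫ s in a..y, g s with hG
  have hGderiv : ∀ y, HasDerivAt G (g y) y := fun y =>
    intervalIntegral.integral_hasDerivAt_right (hgcont.intervalIntegrable a y)
      hgcont.aestronglyMeasurable.stronglyMeasurableAtFilter hgcont.continuousAt
  have hGmono : StrictMono G := by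
    apply strictMono_of_deriv_pos
    intro y
    rw [(hGderiv y).deriv]
    exact hgpos y
  have hGcont : Continuous G :=
    continuous_iff_continuousAt.mpr fun y => (hGderiv y).continuousAt
  have hGa : G a = 0 := intervalIntegral.integral_same
  have hgeq : ∀ s ∈ Icc c d, g s = 1 / Real.sqrt (1 - F.eval s ^ 2) := by
    intro s hs; rw [hg]; simp only [hclamp_eq s hs]
  have hGb : G b = ∫ s in a..b, 1 / Real.sqrt (1 - F.eval s ^ 2) := by
    apply intervalIntegral.integral_congr
    intro s hs
    rw [Set.uIcc_of_le hab.le] at hs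
    exact hgeq s ⟨le_trans hca.le hs.1, le_trans hs.2 hbd.le⟩
  rw [← hGb]
  -- the inverse function
  set x : ℝ → ℝ := Function.invFun G with hx
  have hinj : Function.Injective G := hGmono.injective
  have hxG : ∀ y, x (G y) = y := fun y => Function.leftInverse_invFun hinj y
  have hsurj : ∀ t ∈ Icc (G c) (G d), ∃ y ∈ Icc c d, G y = t := by
    intro t ht
    exact intermediate_value_Icc hcd.le hGcont.continuousOn ht
  have hmem : ∀ t ∈ Icc (G c) (G d), G (x t) = t ∧ x t ∈ Icc c d := by
    intro t ht
    obtain ⟨y, hy, hGy⟩ := hsurj t ht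
    have : x t = y := by rw [← hGy, hxG]
    rw [this, hGy]
    exact ⟨rfl, hy⟩
  have himg : x '' Icc (G c) (G d) = Icc c d := by
    apply Subset.antisymm
    · rintro _ ⟨t, ht, rfl⟩; exact (hmem t ht).2
    · intro y hy
      exact ⟨G y, ⟨hGmono.le_iff_le.mpr hy.1, hGmono.le_iff_le.mpr hy.2⟩, hxG y⟩
  have hxmem : ∀ t ∈ Icc (G a) (G b), x t ∈ Icc a b := by
    intro t ht
    have ht' : t ∈ Icc (G c) (G d) :=
      ⟨le_trans (hGmono hca).le ht.1, le_trans ht.2 (hGmono hbd).le⟩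
    obtain ⟨hGxt, _⟩ := hmem t ht'
    constructor
    · exact hGmono.le_iff_le.mp (by rw [hGxt]; exact ht.1)
    · exact hGmono.le_iff_le.mp (by rw [hGxt]; exact ht.2)
  have hIccnhds : ∀ t ∈ Icc (G a) (G b), Icc (G c) (G d) ∈ nhds t := by
    intro t ht
    exact Icc_mem_nhds (lt_of_lt_of_le (hGmono hca) ht.1) (lt_of_le_of_lt ht.2 (hGmono hbd))
  have hxcont : ∀ t ∈ Icc (G a) (G b), ContinuousAt x t := by
    intro t ht
    have hmono : StrictMonoOn x (Icc (G c) (G d)) := by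
      intro t1 h1 t2 h2 h12
      have e1 := (hmem t1 h1).1
      have e2 := (hmem t2 h2).1
      have : G (x t1) < G (x t2) := by rw [e1, e2]; exact h12
      exact hGmono.lt_iff_lt.mp this
    apply hmono.continuousAt_of_image_mem_nhds (hIccnhds t ht)
    rw [himg]
    have hxt := hxmem t ht
    exact Icc_mem_nhds (lt_of_lt_of_le hca hxt.1) (lt_of_le_of_lt hxt.2 hbd)
  have hxderiv : ∀ t ∈ Icc (G a) (G b),
      HasDerivAt x (Real.sqrt (1 - F.eval (x t) ^ 2)) t := by
    intro t ht
    have ht' : t ∈ Icc (G c) (G d) :=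
      ⟨le_trans (hGmono hca).le ht.1, le_trans ht.2 (hGmono hbd).le⟩
    have hxt : x t ∈ Icc c d := (hmem t ht').2
    have hev : ∀ᶠ t' in nhds t, G (x t') = t' := by
      filter_upwards [hIccnhds t ht] with t' ht'' using (hmem t' ht'').1
    have h := HasDerivAt.of_local_left_inverse (hxcont t ht) (hGderiv (x t))
      (hgpos (x t)).ne' hev
    have : (g (x t))⁻¹ = Real.sqrt (1 - F.eval (x t) ^ 2) := by
      rw [hgeq _ hxt, one_div, inv_inv]
    rwa [this] at h
  constructor
  · refine ⟨x, ?_, ?_, ?_⟩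
    · rw [← hGa, hxG]
    · rw [hxG]
    · intro t ht
      rw [← hGa] at ht
      exact ⟨hxmem t ht, hxderiv t ht⟩
  · rintro T hT ⟨y, hy0, hyT, hsol⟩
    have hTpos : 0 < T := by
      rcases lt_or_eq_of_le hT with h | h
      · exact h
      · exfalso; rw [← h] at hyT; rw [hy0] at hyT; linarith
    have hφd : ∀ t ∈ Icc (0 : ℝ) T, HasDerivAt (fun t => G (y t)) 1 t := by
      intro t ht
      obtain ⟨hmem', hder⟩ := hsol t ht
      have hmem'' : y t ∈ Icc c d := ⟨le_trans hca.le hmem'.1, le_trans hmem'.2 hbd.le⟩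
      have h2 := (hGderiv (y t)).comp t hder
      have : g (y t) * Real.sqrt (1 - F.eval (y t) ^ 2) = 1 := by
        rw [hgeq _ hmem'', one_div_mul_cancel]
        exact (Real.sqrt_pos.mpr (by
          have := hF (y t) ⟨lt_of_lt_of_le (lt_trans ha'c hca) hmem'.1,
            lt_of_le_of_lt hmem'.2 (lt_trans hbd hdb')⟩
          linarith)).ne'
      rwa [this] at h2
    obtain ⟨m, _, hm⟩ := exists_hasDerivAt_eq_slope (fun t => G (y t)) (fun _ => (1 : ℝ))
      hTpos (fun t ht => (hφd t ht).continuousAt.continuousWithinAt)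
      (fun t ht => hφd t (Ioo_subset_Icc_self ht))
    rw [hy0, hyT, hGa, sub_zero, sub_zero] at hm
    field_simp at hm
    linarith
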